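/- Let α > 0 be real and z, λ ∈ ℂ. For q ≥ 1, the determinant of the q×q upper-Hessenberg matrix M^{(q)} with entries M_{j,k} := z·(1/k)·C(k, j−1)·α^{k−j+1} − λ·[j = k] for j ≤ k, M_{j+1,j} := z/j on the subdiagonal, and 0 below the subdiagonal, is given explicitly by det M^{(q)} = Σ_{j=0}^{q} ((j+1)·αz)^{q−j}/(q−j)! · (−λ)^{j}. -/

import Mathlib

open Finset

/-- The q×q upper-Hessenberg matrix `M^{(q)}` (1-based indices `J = j+1`, `K = k+1`):
`M_{J,K} = z·(1/K)·C(K,J−1)·α^{K−J+1} − λ·[J=K]` for `J ≤ K`, `M_{K+1,K} = z/K` on the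
subdiagonal, and `0` below the subdiagonal. -/
noncomputable def hessM (α : ℝ) (z l : ℂ) (q : ℕ) : Matrix (Fin q) (Fin q) ℂ :=
  fun j k =>
    if j.1 ≤ k.1 then
      z * (1 / ((k.1 + 1 : ℕ) : ℂ)) * ((Nat.choose (k.1 + 1) j.1 : ℕ) : ℂ)
          * (α : ℂ) ^ (k.1 + 1 - j.1)
        - (if j = k then l else 0)
    else if j.1 = k.1 + 1 then z / ((k.1 + 1 : ℕ) : ℂ)
    else 0

/-- The target polynomial `T_n(t,u) = Σ_{j=0}^n ((j+1)t)^{n-j}/(n-j)! · u^j`. -/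
noncomputable def Tpoly (t u : ℂ) (n : ℕ) : ℂ :=
  ∑ j ∈ range (n+1), (((j+1:ℕ):ℂ) * t) ^ (n-j) / ((Nat.factorial (n-j) : ℂ)) * u ^ j

lemma binom_diff (s : ℂ) (n : ℕ) :
    ∑ k ∈ range n, (-1:ℂ)^(k+n+1) * (n.choose k : ℕ) * s^k = s^n - (s-1)^n := by
  have h := sub_pow s 1 n
  rw [Finset.sum_range_succ] at h
  have h2 : (-1:ℂ)^(n+n) = 1 := by rw [pow_add, ← mul_pow]; norm_num
  simp only [one_pow, mul_one, Nat.choose_self, Nat.cast_one, h2] at h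
  rw [h]
  have : s ^ n - (∑ x ∈ range n, (-1:ℂ) ^ (x + n) * s ^ x * ↑(n.choose x) + 1 * s ^ n)
      = ∑ x ∈ range n, -((-1:ℂ) ^ (x + n) * s ^ x * ↑(n.choose x)) := by
    rw [Finset.sum_neg_distrib]; ring
  rw [this]
  exact Finset.sum_congr rfl fun k _ => by ring

lemma hessM_inner_sum (t u : ℂ) (q j : ℕ) (hj : j ≤ q) :
    ∑ i ∈ Finset.Ico j (q+1),
        (-1:ℂ)^(i+q) * (t^(q+1-i) / ((Nat.factorial (q+1-i) : ℂ))) *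
          ((((j+1:ℕ):ℂ) * t) ^ (i-j) / ((Nat.factorial (i-j) : ℂ)) * u ^ j)
      = ((((j+1:ℕ):ℂ))^(q+1-j) - ((j:ℕ):ℂ)^(q+1-j)) * t^(q+1-j)
          / ((Nat.factorial (q+1-j) : ℂ)) * u ^ j := by
  set n := q + 1 - j with hn
  rw [Finset.sum_Ico_eq_sum_range]
  set s : ℂ := ((j+1:ℕ):ℂ) with hs
  have hn0 : (Nat.factorial n : ℂ) ≠ 0 := Nat.cast_ne_zero.2 (Nat.factorial_ne_zero n)
  have hstep : ∀ k ∈ range n,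
      (-1:ℂ)^((j+k)+q) * (t^(q+1-(j+k)) / ((Nat.factorial (q+1-(j+k)) : ℂ))) *
          ((s * t) ^ ((j+k)-j) / ((Nat.factorial ((j+k)-j) : ℂ)) * u ^ j)
        = (t^n / ((Nat.factorial n : ℂ)) * u ^ j) *
            ((-1:ℂ)^(k+n+1) * ((n.choose k : ℕ):ℂ) * s^k) := by
    intro k hk
    rw [Finset.mem_range] at hk
    have h1 : q + 1 - (j+k) = n - k := by omega
    have h2 : (j+k) - j = k := by omega
    rw [h1, h2]
    have hsign : (-1:ℂ)^((j+k)+q) = (-1:ℂ)^(k+n+1) := by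
      have he : (j+k)+q+2 = (k+n+1) + 2*j := by omega
      have h3 : ((-1:ℂ)^((j+k)+q)) * ((-1:ℂ)^2) = ((-1:ℂ)^(k+n+1)) * ((-1:ℂ)^2)^j := by
        rw [← pow_add, ← pow_mul, ← pow_add, he]
      simpa using h3
    rw [hsign]
    have hfac : ((n.choose k : ℕ):ℂ) * (Nat.factorial k : ℂ) * (Nat.factorial (n-k) : ℂ)
        = (Nat.factorial n : ℂ) := by
      exact_mod_cast congrArg (Nat.cast : ℕ → ℂ)
        (Nat.choose_mul_factorial_mul_factorial (le_of_lt hk))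
    have htpow : t^(n-k) * t^k = t^n := by
      rw [← pow_add]; congr 1; omega
    have hk0 : (Nat.factorial k : ℂ) ≠ 0 := Nat.cast_ne_zero.2 (Nat.factorial_ne_zero k)
    have hnk0 : (Nat.factorial (n-k) : ℂ) ≠ 0 := Nat.cast_ne_zero.2 (Nat.factorial_ne_zero _)
    rw [mul_pow]
    field_simp
    linear_combination (s^k * u^j * (Nat.factorial n : ℂ)) * htpow -
      (s^k * u^j * t^n) * hfac
  rw [Finset.sum_congr rfl hstep, ← Finset.mul_sum, binom_diff]
  have hs1 : s - 1 = ((j:ℕ):ℂ) := by rw [hs]; push_cast; ring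
  rw [hs1]
  ring

lemma Tpoly_rec (t u : ℂ) (q : ℕ) :
    Tpoly t u (q+1) = u * Tpoly t u q +
      ∑ i ∈ range (q+1),
        (-1:ℂ)^(i+q) * (t^(q+1-i) / ((Nat.factorial (q+1-i) : ℂ))) * Tpoly t u i := by
  have hswap :
      (∑ i ∈ range (q+1), ∑ j ∈ range (i+1),
          (-1:ℂ)^(i+q) * (t^(q+1-i) / ((Nat.factorial (q+1-i) : ℂ))) *
            ((((j+1:ℕ):ℂ) * t) ^ (i-j) / ((Nat.factorial (i-j) : ℂ)) * u ^ j))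
        = ∑ j ∈ range (q+1), ∑ i ∈ Finset.Ico j (q+1),
          (-1:ℂ)^(i+q) * (t^(q+1-i) / ((Nat.factorial (q+1-i) : ℂ))) *
            ((((j+1:ℕ):ℂ) * t) ^ (i-j) / ((Nat.factorial (i-j) : ℂ)) * u ^ j) := by
    simp only [Finset.range_eq_Ico]
    exact (Finset.sum_Ico_Ico_comm 0 (q+1) fun j i =>
      (-1:ℂ)^(i+q) * (t^(q+1-i) / ((Nat.factorial (q+1-i) : ℂ))) *
        ((((j+1:ℕ):ℂ) * t) ^ (i-j) / ((Nat.factorial (i-j) : ℂ)) * u ^ j)).symm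
  have hexp : ∑ i ∈ range (q+1),
      (-1:ℂ)^(i+q) * (t^(q+1-i) / ((Nat.factorial (q+1-i) : ℂ))) * Tpoly t u i
      = ∑ i ∈ range (q+1), ∑ j ∈ range (i+1),
          (-1:ℂ)^(i+q) * (t^(q+1-i) / ((Nat.factorial (q+1-i) : ℂ))) *
            ((((j+1:ℕ):ℂ) * t) ^ (i-j) / ((Nat.factorial (i-j) : ℂ)) * u ^ j) :=
    Finset.sum_congr rfl fun i _ => by rw [Tpoly, Finset.mul_sum]
  rw [hexp, hswap]
  have hinner : ∀ j ∈ range (q+1),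
      (∑ i ∈ Finset.Ico j (q+1),
          (-1:ℂ)^(i+q) * (t^(q+1-i) / ((Nat.factorial (q+1-i) : ℂ))) *
            ((((j+1:ℕ):ℂ) * t) ^ (i-j) / ((Nat.factorial (i-j) : ℂ)) * u ^ j))
        = ((((j+1:ℕ):ℂ))^(q+1-j) - ((j:ℕ):ℂ)^(q+1-j)) * t^(q+1-j)
            / ((Nat.factorial (q+1-j) : ℂ)) * u ^ j := fun j hj =>
    hessM_inner_sum t u q j (by rw [Finset.mem_range] at hj; omega)
  rw [Finset.sum_congr rfl hinner]
  have hsplit : ∑ j ∈ range (q+1),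
      ((((j+1:ℕ):ℂ))^(q+1-j) - ((j:ℕ):ℂ)^(q+1-j)) * t^(q+1-j)
          / ((Nat.factorial (q+1-j) : ℂ)) * u ^ j
      = (∑ j ∈ range (q+1), (((j+1:ℕ):ℂ) * t)^(q+1-j)
            / ((Nat.factorial (q+1-j) : ℂ)) * u ^ j)
        - ∑ j ∈ range (q+1), (((j:ℕ):ℂ) * t)^(q+1-j)
            / ((Nat.factorial (q+1-j) : ℂ)) * u ^ j := by
    rw [← Finset.sum_sub_distrib]
    exact Finset.sum_congr rfl fun j _ => by rw [mul_pow, mul_pow]; ring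
  rw [hsplit]
  have hA1 : Tpoly t u (q+1)
      = (∑ j ∈ range (q+1), (((j+1:ℕ):ℂ) * t)^(q+1-j)
            / ((Nat.factorial (q+1-j) : ℂ)) * u ^ j) + u^(q+1) := by
    rw [Tpoly, Finset.sum_range_succ]
    simp
  have hu : u * Tpoly t u q
      = ∑ j ∈ range (q+1), ((((j+1:ℕ)):ℂ) * t)^(q+1-(j+1))
            / ((Nat.factorial (q+1-(j+1)) : ℂ)) * u ^ (j+1) := by
    rw [Tpoly, Finset.mul_sum]
    refine Finset.sum_congr rfl fun j _ => ?_
    have h : q + 1 - (j+1) = q - j := by omega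
    rw [h]; ring
  have hg : ∑ j ∈ range (q+2), (((j:ℕ):ℂ) * t)^(q+1-j)
            / ((Nat.factorial (q+1-j) : ℂ)) * u ^ j
      = ∑ j ∈ range (q+1), ((((j+1:ℕ)):ℂ) * t)^(q+1-(j+1))
            / ((Nat.factorial (q+1-(j+1)) : ℂ)) * u ^ (j+1)
        + (((0:ℕ):ℂ) * t)^(q+1-0) / ((Nat.factorial (q+1-0) : ℂ)) * u ^ 0 :=
    Finset.sum_range_succ' _ (q+1)
  have hg2 : ∑ j ∈ range (q+2), (((j:ℕ):ℂ) * t)^(q+1-j)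
            / ((Nat.factorial (q+1-j) : ℂ)) * u ^ j
      = (∑ j ∈ range (q+1), (((j:ℕ):ℂ) * t)^(q+1-j)
            / ((Nat.factorial (q+1-j) : ℂ)) * u ^ j) + u^(q+1) := by
    rw [Finset.sum_range_succ]
    congr 1
    simp
  have hzero : (((0:ℕ):ℂ) * t)^(q+1-0) / ((Nat.factorial (q+1-0) : ℂ)) * u ^ 0 = 0 := by
    simp [zero_pow (Nat.succ_ne_zero q)]
  linear_combination hA1 - hu + hg - hg2 + hzero

/-- If all entries below the diagonal in rows `≥ J` vanish, the determinant factors as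
the determinant of the top-left `J×J` block times the product of diagonal entries in rows `≥ J`. -/
lemma det_tail_triangular {J : ℕ} :
    ∀ (n : ℕ) (hJ : J ≤ n) (N : Matrix (Fin n) (Fin n) ℂ),
      (∀ r c : Fin n, J ≤ r.1 → c.1 < r.1 → N r c = 0) →
      N.det = (N.submatrix (Fin.castLE hJ) (Fin.castLE hJ)).det *
        ∏ r : Fin n, (if J ≤ r.1 then N r r else 1) := by
  refine Nat.le_induction ?_ ?_
  · intro N _
    have h1 : N.submatrix (Fin.castLE le_rfl) (Fin.castLE le_rfl) = N := by
      ext i j; simp [Fin.castLE]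
    have h2 : ∀ r : Fin J, ¬ (J ≤ r.1) := fun r => by omega
    simp [h1, h2]
  · intro n hJn IH N hN
    rw [Matrix.det_succ_row N (Fin.last n)]
    rw [Finset.sum_eq_single (Fin.last n)]
    · have hsub : (Fin.last n).succAbove = Fin.castSucc := Fin.succAbove_last
      rw [hsub]
      set N' := N.submatrix Fin.castSucc Fin.castSucc with hN'
      have hN'h : ∀ r c : Fin n, J ≤ r.1 → c.1 < r.1 → N' r c = 0 := by
        intro r c hr hc; exact hN _ _ hr hc
      have := IH N' hN'h
      rw [this]
      have hsub2 : N'.submatrix (Fin.castLE hJn) (Fin.castLE hJn)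
          = N.submatrix (Fin.castLE (by omega : J ≤ n+1)) (Fin.castLE (by omega)) := by
        ext i j; simp [N', Fin.castSucc, Fin.castLE, Fin.castAdd, Fin.castSucc]
      rw [hsub2]
      rw [Fin.prod_univ_castSucc (f := fun r : Fin (n+1) => if J ≤ r.1 then N r r else 1)]
      have hlast : ((Fin.last n : Fin (n+1)) : ℕ) = n := rfl
      have hsign : (-1 : ℂ) ^ ((Fin.last n : Fin (n+1)) + (Fin.last n : Fin (n+1)) : ℕ) = 1 := by
        rw [hlast, pow_add, ← mul_pow]; norm_num
      rw [hsign]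
      have hif : (if J ≤ ((Fin.last n : Fin (n+1)) : ℕ) then N (Fin.last n) (Fin.last n) else 1)
          = N (Fin.last n) (Fin.last n) := by rw [if_pos]; simpa using hJn
      rw [hif]
      have hprodeq : (∏ r : Fin n, if J ≤ r.1 then N' r r else 1)
          = ∏ r : Fin n, (if J ≤ ((Fin.castSucc r : Fin (n+1)) : ℕ)
              then N r.castSucc r.castSucc else 1) := by
        apply Finset.prod_congr rfl; intro r _; rfl
      rw [hprodeq]
      ring
    · intro j _ hj
      have : N (Fin.last n) j = 0 := by
        apply hN
        · simpa using hJn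
        · have : j.1 ≠ n := fun h => hj (Fin.ext h)
          have := j.2; simp [Fin.last]; omega
      simp [this]
    · intro h; exact absurd (Finset.mem_univ _) h

lemma hessM_minor (α : ℝ) (z l : ℂ) (q : ℕ) (i : Fin (q+1)) :
    ((hessM α z l (q+1)).submatrix i.succAbove Fin.castSucc).det
      = (hessM α z l i.1).det *
          ∏ r : Fin q, (if i.1 ≤ r.1 then z / ((r.1 + 1 : ℕ) : ℂ) else 1) := by
  have hJ : i.1 ≤ q := by omega
  set N := (hessM α z l (q+1)).submatrix i.succAbove Fin.castSucc with hN
  have hsucc : ∀ r : Fin q, i.1 ≤ r.1 → i.succAbove r = r.succ := by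
    intro r hr
    exact Fin.succAbove_of_le_castSucc i r (by
      rw [Fin.le_castSucc_iff]
      simp only [Fin.lt_def, Fin.val_succ, Fin.coe_castSucc]
      omega)
  have hyp : ∀ r c : Fin q, i.1 ≤ r.1 → c.1 < r.1 → N r c = 0 := by
    intro r c hr hc
    simp only [hN, Matrix.submatrix_apply]
    rw [hsucc r hr]
    simp only [hessM]
    rw [if_neg (by simp; omega), if_neg (by simp; omega)]
  have := det_tail_triangular q hJ N hyp
  rw [this]
  congr 1
  · congr 1
    ext r c
    simp only [hN, Matrix.submatrix_apply]
    have h1 : i.succAbove (Fin.castLE hJ r) = Fin.castSucc (Fin.castLE hJ r) := by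
      apply Fin.succAbove_of_castSucc_lt
      simp only [Fin.lt_def, Fin.coe_castSucc, Fin.coe_castLE]
      omega
    rw [h1]
    simp only [hessM, Fin.coe_castSucc, Fin.coe_castLE, Fin.ext_iff]
  · apply Finset.prod_congr rfl
    intro r _
    by_cases hr : i.1 ≤ r.1
    · rw [if_pos hr, if_pos hr]
      simp only [hN, Matrix.submatrix_apply]
      rw [hsucc r hr]
      simp [hessM]
    · rw [if_neg hr, if_neg hr]

lemma prodP (z : ℂ) (m : ℕ) : ∀ (q : ℕ), m ≤ q →
    (∏ r : Fin q, (if m ≤ r.1 then z / ((r.1 + 1 : ℕ) : ℂ) else 1))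
      = z ^ (q - m) * (Nat.factorial m : ℂ) / (Nat.factorial q : ℂ) := by
  refine Nat.le_induction ?_ ?_
  · have h : ∀ r : Fin m, ¬ (m ≤ r.1) := fun r => by omega
    simp [h]
    exact (div_self (Nat.cast_ne_zero.2 (Nat.factorial_ne_zero m))).symm
  · intro q hq IH
    rw [Fin.prod_univ_castSucc (f := fun r : Fin (q+1) =>
      if m ≤ r.1 then z / ((r.1 + 1 : ℕ) : ℂ) else 1)]
    have hcast : ∀ r : Fin q, (if m ≤ ((r.castSucc : Fin (q+1)) : ℕ) then
        z / ((((r.castSucc : Fin (q+1)) : ℕ) + 1 : ℕ) : ℂ) else 1)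
        = (if m ≤ r.1 then z / ((r.1 + 1 : ℕ) : ℂ) else 1) := fun r => rfl
    rw [Finset.prod_congr rfl (fun r _ => hcast r), IH]
    have hlast : ((Fin.last q : Fin (q+1)) : ℕ) = q := rfl
    rw [hlast, if_pos hq]
    have h1 : q + 1 - m = (q - m) + 1 := by omega
    have h2 : (Nat.factorial (q+1) : ℂ) = ((q+1:ℕ):ℂ) * (Nat.factorial q : ℂ) := by
      rw [Nat.factorial_succ]; push_cast; ring
    have hq0 : ((q+1:ℕ):ℂ) ≠ 0 := Nat.cast_ne_zero.2 (Nat.succ_ne_zero q)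
    have hf0 : (Nat.factorial q : ℂ) ≠ 0 := Nat.cast_ne_zero.2 (Nat.factorial_ne_zero q)
    rw [h1, h2, pow_succ]
    field_simp

lemma hessM_det_all (α : ℝ) (z l : ℂ) :
    ∀ q : ℕ, (hessM α z l q).det = Tpoly ((α:ℂ) * z) (-l) q := by
  intro q
  induction q using Nat.strong_induction_on with
  | _ q IH =>
    match q, IH with
    | 0, _ => simp [Tpoly]
    | p+1, IH =>
      rw [Matrix.det_succ_column (hessM α z l (p+1)) (Fin.last p)]
      have hterm : ∀ i : Fin (p+1),
          (-1:ℂ)^((i : ℕ) + ((Fin.last p : Fin (p+1)) : ℕ)) * hessM α z l (p+1) i (Fin.last p) *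
            ((hessM α z l (p+1)).submatrix i.succAbove (Fin.last p).succAbove).det
          = (-1:ℂ)^(i.1 + p) *
              (((α:ℂ)*z)^(p+1-i.1) / ((Nat.factorial (p+1-i.1)):ℂ)) * Tpoly ((α:ℂ)*z) (-l) i.1
            + (if i.1 = p then (-l) * Tpoly ((α:ℂ)*z) (-l) p else 0) := by
        intro i
        have hip : i.1 ≤ p := by omega
        rw [Fin.succAbove_last, hessM_minor α z l p i, IH i.1 (by omega),
          prodP z i.1 p hip]
        have hval : hessM α z l (p+1) i (Fin.last p)
            = z * (1 / ((p + 1 : ℕ) : ℂ)) * ((Nat.choose (p+1) i.1 : ℕ) : ℂ)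
                * (α : ℂ) ^ (p + 1 - i.1)
              - (if i = Fin.last p then l else 0) := by
          simp only [hessM, Fin.val_last]
          rw [if_pos hip]
        rw [hval]
        have hlast : ((Fin.last p : Fin (p+1)) : ℕ) = p := rfl
        rw [hlast]
        have hp0 : ((p+1:ℕ):ℂ) ≠ 0 := Nat.cast_ne_zero.2 (Nat.succ_ne_zero p)
        have hfp : (Nat.factorial p : ℂ) ≠ 0 := Nat.cast_ne_zero.2 (Nat.factorial_ne_zero p)
        by_cases h : i.1 = p
        · have hieq : i = Fin.last p := Fin.ext h
          rw [if_pos hieq, if_pos h, h]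
          have hsign : (-1:ℂ)^(p+p) = 1 := by rw [pow_add, ← mul_pow]; norm_num
          rw [hsign]
          have hc : ((Nat.choose (p+1) p : ℕ) : ℂ) = ((p+1:ℕ):ℂ) := by
            rw [Nat.choose_succ_self_right]
          rw [hc]
          simp only [Nat.sub_self, pow_zero, Nat.add_sub_cancel_left, Nat.factorial_one,
            Nat.factorial_zero]
          push_cast at hp0
          field_simp [hp0]
          ring
        · have hine : i ≠ Fin.last p := fun hc => h (by rw [hc]; rfl)
          rw [if_neg hine, if_neg h]
          have hfac : ((Nat.choose (p+1) i.1 : ℕ):ℂ) * (Nat.factorial i.1 : ℂ)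
              * (Nat.factorial (p+1-i.1) : ℂ) = (Nat.factorial (p+1) : ℂ) := by
            exact_mod_cast congrArg (Nat.cast : ℕ → ℂ)
              (Nat.choose_mul_factorial_mul_factorial (by omega : i.1 ≤ p+1))
          have hfs : (Nat.factorial (p+1) : ℂ) = ((p+1:ℕ):ℂ) * (Nat.factorial p : ℂ) := by
            rw [Nat.factorial_succ]; push_cast; ring
          have hfq0 : (Nat.factorial (p+1-i.1) : ℂ) ≠ 0 :=
            Nat.cast_ne_zero.2 (Nat.factorial_ne_zero _)
          have hzpow : z * z^(p-i.1) = z^(p+1-i.1) := by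
            rw [← pow_succ']; congr 1; omega
          have hmp : ((α:ℂ)*z)^(p+1-i.1) = (α:ℂ)^(p+1-i.1) * z^(p+1-i.1) := mul_pow _ _ _
          rw [sub_zero, add_zero, hmp]
          trans (((-1:ℂ)^(i.1+p) * z * z^(p-i.1) * ((Nat.choose (p+1) i.1 : ℕ):ℂ) *
              (α:ℂ)^(p+1-i.1) * Tpoly ((α:ℂ)*z) (-l) i.1 * ((Nat.factorial i.1 : ℕ):ℂ)) /
              (((p+1:ℕ):ℂ) * ((Nat.factorial p : ℕ):ℂ)))
          · ring
          trans (((-1:ℂ)^(i.1+p) * (α:ℂ)^(p+1-i.1) * z^(p+1-i.1) * Tpoly ((α:ℂ)*z) (-l) i.1) /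
              ((Nat.factorial (p+1-i.1) : ℕ):ℂ))
          · rw [div_eq_div_iff (mul_ne_zero hp0 hfp) hfq0]
            linear_combination ((-1:ℂ)^(i.1+p) * (α:ℂ)^(p+1-i.1) * Tpoly ((α:ℂ)*z) (-l) i.1 *
                ((Nat.choose (p+1) i.1 : ℕ):ℂ) * ((Nat.factorial i.1 : ℕ):ℂ) *
                ((Nat.factorial (p+1-i.1) : ℕ):ℂ)) * hzpow +
              ((-1:ℂ)^(i.1+p) * (α:ℂ)^(p+1-i.1) * Tpoly ((α:ℂ)*z) (-l) i.1 * z^(p+1-i.1)) * hfac +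
              ((-1:ℂ)^(i.1+p) * (α:ℂ)^(p+1-i.1) * Tpoly ((α:ℂ)*z) (-l) i.1 * z^(p+1-i.1)) * hfs
          · ring
      simp only [hterm]
      rw [Finset.sum_add_distrib]
      have h2 : (∑ i : Fin (p+1), (if (i:ℕ) = p then (-l) * Tpoly ((α:ℂ)*z) (-l) p else 0))
          = (-l) * Tpoly ((α:ℂ)*z) (-l) p := by
        rw [Fin.sum_univ_eq_sum_range
          (fun m => if m = p then (-l) * Tpoly ((α:ℂ)*z) (-l) p else 0)]
        rw [Finset.sum_ite_eq' (range (p+1)) p (fun _ => (-l) * Tpoly ((α:ℂ)*z) (-l) p)]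
        simp
      rw [h2]
      rw [Fin.sum_univ_eq_sum_range (fun m => (-1:ℂ)^(m+p) *
        (((α:ℂ)*z)^(p+1-m) / ((Nat.factorial (p+1-m)):ℂ)) * Tpoly ((α:ℂ)*z) (-l) m)]
      rw [Tpoly_rec ((α:ℂ)*z) (-l) p]
      ring

/-- `det M^{(q)} = Σ_{j=0}^{q} ((j+1)·αz)^{q−j}/(q−j)! · (−λ)^j`. -/
theorem hessM_det (α : ℝ) (hα : 0 < α) (z l : ℂ) (q : ℕ) (hq : 1 ≤ q) :
    (hessM α z l q).det
      = ∑ j ∈ range (q + 1),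
          (((j + 1 : ℕ) : ℂ) * ((α : ℂ) * z)) ^ (q - j)
            / ((Nat.factorial (q - j) : ℂ)) * (-l) ^ j := by
  exact hessM_det_all α z l q
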